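/- Let μ be a Borel probability measure on ℝ that is absolutely continuous on the interval I = (x₀−η, x₀+η) for some x₀ ∈ ℝ and η > 0, with density ρ on I that is Lipschitz continuous on I (i.e. ρ ∈ C^{0,1}(I)). Let μ^ε denote the Poisson-smoothed measure. Then |ρ(x₀) − μ^ε(x₀)| = O(ε log(1/ε)) as ε ↓ 0; that is, there exist C > 0 and ε₀ ∈ (0,1) such that |ρ(x₀) − μ^ε(x₀)| ≤ C ε log(1/ε) for all 0 < ε < ε₀. -/

import Mathlib

open MeasureTheory Real Set

/-- The Poisson-smoothed measure `μ^ε(x) = (1/π) ∫ ε/(ε²+(x−y)²) dμ(y)`. -/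
noncomputable def poissonSmooth (μ : Measure ℝ) (ε x : ℝ) : ℝ :=
  (1 / π) * ∫ y, ε / (ε ^ 2 + (x - y) ^ 2) ∂μ

/-- `μ` is absolutely continuous on `I` with (nonnegative) density `ρ ∈ L¹(I)`. -/
def ACOnWithDensity (μ : Measure ℝ) (I : Set ℝ) (ρ : ℝ → ℝ) : Prop :=
  (∀ y ∈ I, 0 ≤ ρ y) ∧ IntegrableOn ρ I volume ∧
    μ.restrict I = (volume.restrict I).withDensity (fun y => ENNReal.ofReal (ρ y))

lemma kernel_cont {ε x₀ : ℝ} (hε : 0 < ε) :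
    Continuous (fun y : ℝ => ε / (ε ^ 2 + (x₀ - y) ^ 2)) := by
  apply continuous_const.div (by continuity)
  intro y; positivity

lemma kernel_antideriv {ε x₀ : ℝ} (hε : 0 < ε) (y : ℝ) :
    HasDerivAt (fun y => arctan ((y - x₀) / ε)) (ε / (ε ^ 2 + (x₀ - y) ^ 2)) y := by
  have h1 : HasDerivAt (fun y : ℝ => (y - x₀) / ε) (1 / ε) y := by
    simpa using ((hasDerivAt_id y).sub_const x₀).div_const ε
  have h2 := (Real.hasDerivAt_arctan ((y - x₀) / ε)).comp y h1
  refine h2.congr_deriv ?_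
  have hne : ε ^ 2 + (x₀ - y) ^ 2 ≠ 0 := by positivity
  field_simp
  ring

lemma kernel_integral_Ioo {ε x₀ η : ℝ} (hε : 0 < ε) (hη : 0 < η) :
    ∫ y in Ioo (x₀ - η) (x₀ + η), ε / (ε ^ 2 + (x₀ - y) ^ 2) = 2 * arctan (η / ε) := by
  rw [← integral_Ioc_eq_integral_Ioo, ← intervalIntegral.integral_of_le (by linarith)]
  rw [intervalIntegral.integral_eq_sub_of_hasDerivAt (fun y _ => kernel_antideriv hε y)
    ((kernel_cont (x₀ := x₀) hε).intervalIntegrable _ _)]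
  have h1 : (x₀ - η - x₀) / ε = -(η / ε) := by ring
  have h2 : (x₀ + η - x₀) / ε = η / ε := by ring
  rw [h1, h2, arctan_neg]
  ring

lemma log_antideriv {ε x₀ : ℝ} (hε : 0 < ε) (y : ℝ) :
    HasDerivAt (fun y => (ε / 2) * Real.log (ε ^ 2 + (x₀ - y) ^ 2))
      (ε * (y - x₀) / (ε ^ 2 + (x₀ - y) ^ 2)) y := by
  have hne : ε ^ 2 + (x₀ - y) ^ 2 ≠ 0 := by positivity
  have h1 : HasDerivAt (fun y : ℝ => ε ^ 2 + (x₀ - y) ^ 2)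
      (2 * (x₀ - y) ^ 1 * (-1)) y :=
    (((hasDerivAt_id y).const_sub x₀).pow 2).const_add (ε ^ 2)
  have h2 := ((Real.hasDerivAt_log hne).comp y h1).const_mul (ε / 2)
  refine h2.congr_deriv ?_
  field_simp
  ring

lemma abs_kernel_integral {ε x₀ η : ℝ} (hε : 0 < ε) (hη : 0 < η) :
    ∫ y in Ioo (x₀ - η) (x₀ + η), ε * |x₀ - y| / (ε ^ 2 + (x₀ - y) ^ 2) =
      ε * (Real.log (ε ^ 2 + η ^ 2) - Real.log (ε ^ 2)) := by
  have hcont : Continuous (fun y : ℝ => ε * |x₀ - y| / (ε ^ 2 + (x₀ - y) ^ 2)) := by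
    apply Continuous.div (by continuity) (by continuity)
    intro y; positivity
  rw [← integral_Ioc_eq_integral_Ioo, ← intervalIntegral.integral_of_le (by linarith)]
  rw [← intervalIntegral.integral_add_adjacent_intervals
    (hcont.intervalIntegrable (x₀ - η) x₀) (hcont.intervalIntegrable x₀ (x₀ + η))]
  have hL : (∫ y in (x₀ - η)..x₀, ε * |x₀ - y| / (ε ^ 2 + (x₀ - y) ^ 2)) =
      (ε / 2) * (Real.log (ε ^ 2 + η ^ 2) - Real.log (ε ^ 2)) := by
    have hcongr : ∀ y ∈ Set.uIcc (x₀ - η) x₀,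
        ε * |x₀ - y| / (ε ^ 2 + (x₀ - y) ^ 2) = -(ε * (y - x₀) / (ε ^ 2 + (x₀ - y) ^ 2)) := by
      intro y hy
      rw [Set.uIcc_of_le (by linarith)] at hy
      rw [abs_of_nonneg (by linarith [hy.2])]
      ring
    rw [intervalIntegral.integral_congr hcongr, intervalIntegral.integral_neg,
      intervalIntegral.integral_eq_sub_of_hasDerivAt (fun y _ => log_antideriv hε y)
        (by apply Continuous.intervalIntegrable; apply Continuous.div (by continuity)
              (by continuity); intro y; positivity)]
    have h1 : x₀ - (x₀ - η) = η := by ring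
    have h2 : x₀ - x₀ = 0 := by ring
    rw [h1, h2]
    simp
    ring
  have hR : (∫ y in x₀..(x₀ + η), ε * |x₀ - y| / (ε ^ 2 + (x₀ - y) ^ 2)) =
      (ε / 2) * (Real.log (ε ^ 2 + η ^ 2) - Real.log (ε ^ 2)) := by
    have hcongr : ∀ y ∈ Set.uIcc x₀ (x₀ + η),
        ε * |x₀ - y| / (ε ^ 2 + (x₀ - y) ^ 2) = ε * (y - x₀) / (ε ^ 2 + (x₀ - y) ^ 2) := by
      intro y hy
      rw [Set.uIcc_of_le (by linarith)] at hy
      rw [abs_of_nonpos (by linarith [hy.1])]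
      ring
    rw [intervalIntegral.integral_congr hcongr,
      intervalIntegral.integral_eq_sub_of_hasDerivAt (fun y _ => log_antideriv hε y)
        (by apply Continuous.intervalIntegrable; apply Continuous.div (by continuity)
              (by continuity); intro y; positivity)]
    have h1 : x₀ - (x₀ + η) = -η := by ring
    have h2 : x₀ - x₀ = 0 := by ring
    rw [h1, h2]
    simp
    ring
  rw [hL, hR]; ring


lemma compl_bound (μ : Measure ℝ) [IsProbabilityMeasure μ] {ε x₀ η : ℝ}
    (hε : 0 < ε) (hη : 0 < η) :
    |∫ y in (Ioo (x₀ - η) (x₀ + η))ᶜ, ε / (ε ^ 2 + (x₀ - y) ^ 2) ∂μ| ≤ ε / η ^ 2 := by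
  set K : ℝ → ℝ := fun y => ε / (ε ^ 2 + (x₀ - y) ^ 2) with hKdef
  have hK0 : ∀ y, 0 ≤ K y := fun y => by positivity
  have h1 : ‖∫ y in (Ioo (x₀ - η) (x₀ + η))ᶜ, K y ∂μ‖ ≤
      (ε / η ^ 2) * (μ (Ioo (x₀ - η) (x₀ + η))ᶜ).toReal := by
    refine norm_setIntegral_le_of_norm_le_const (measure_lt_top μ _) (fun y hy => ?_)
    have hy2 : η ^ 2 ≤ (x₀ - y) ^ 2 := by
      simp only [mem_compl_iff, mem_Ioo, not_and, not_lt] at hy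
      rcases le_or_gt y (x₀ - η) with h | h
      · nlinarith
      · have := hy h; nlinarith
    rw [Real.norm_eq_abs, abs_of_nonneg (hK0 y)]
    simp only [hKdef]
    rw [div_le_div_iff₀ (by positivity) (by positivity)]
    nlinarith [sq_nonneg ε, sq_nonneg η]
  have h2 : (μ (Ioo (x₀ - η) (x₀ + η))ᶜ).toReal ≤ 1 := by
    have hle : μ (Ioo (x₀ - η) (x₀ + η))ᶜ ≤ 1 := prob_le_one
    calc (μ (Ioo (x₀ - η) (x₀ + η))ᶜ).toReal ≤ (1 : ENNReal).toReal :=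
          ENNReal.toReal_mono ENNReal.one_ne_top hle
      _ = 1 := by simp
  calc |∫ y in (Ioo (x₀ - η) (x₀ + η))ᶜ, K y ∂μ|
      ≤ (ε / η ^ 2) * (μ (Ioo (x₀ - η) (x₀ + η))ᶜ).toReal := by
        rw [← Real.norm_eq_abs]; exact h1
    _ ≤ (ε / η ^ 2) * 1 := mul_le_mul_of_nonneg_left h2 (by positivity)
    _ = ε / η ^ 2 := mul_one _

lemma kernel_integrableOn {ε x₀ η : ℝ} (hε : 0 < ε) :
    IntegrableOn (fun y => ε / (ε ^ 2 + (x₀ - y) ^ 2)) (Ioo (x₀ - η) (x₀ + η)) volume := by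
  have hc : IntegrableOn (fun _ : ℝ => 1 / ε) (Ioo (x₀ - η) (x₀ + η)) volume :=
    integrableOn_const measure_Ioo_lt_top.ne
  refine hc.mono' ((kernel_cont hε).aestronglyMeasurable.restrict) ?_
  filter_upwards with y
  rw [Real.norm_eq_abs, abs_of_nonneg (by positivity)]
  rw [div_le_div_iff₀ (by positivity) hε]
  nlinarith [sq_nonneg (x₀ - y)]

lemma abs_kernel_cont {ε x₀ : ℝ} (hε : 0 < ε) :
    Continuous (fun y : ℝ => ε * |x₀ - y| / (ε ^ 2 + (x₀ - y) ^ 2)) := by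
  apply Continuous.div
    (continuous_const.mul (continuous_const.sub continuous_id).abs)
    (continuous_const.add ((continuous_const.sub continuous_id).pow 2))
  intro y; simp only [Pi.add_apply, Pi.sub_apply, Pi.pow_apply, id]; positivity

lemma abs_kernel_integrableOn {ε x₀ η : ℝ} (hε : 0 < ε) :
    IntegrableOn (fun y => ε * |x₀ - y| / (ε ^ 2 + (x₀ - y) ^ 2))
      (Ioo (x₀ - η) (x₀ + η)) volume := by
  have hc : IntegrableOn (fun _ : ℝ => (1 : ℝ) / 2) (Ioo (x₀ - η) (x₀ + η)) volume :=
    integrableOn_const measure_Ioo_lt_top.ne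
  refine hc.mono' ((abs_kernel_cont hε).aestronglyMeasurable.restrict) ?_
  filter_upwards with y
  rw [Real.norm_eq_abs, abs_of_nonneg (by positivity)]
  rw [div_le_iff₀ (by positivity)]
  nlinarith [sq_nonneg (ε - |x₀ - y|), sq_abs (x₀ - y)]

lemma inner_bound {ε x₀ η L : ℝ} {ρ : ℝ → ℝ} (hε : 0 < ε) (hη : 0 < η) (hL0 : 0 ≤ L)
    (hρint : IntegrableOn ρ (Ioo (x₀ - η) (x₀ + η)) volume)
    (hLip : ∀ y ∈ Ioo (x₀ - η) (x₀ + η), |ρ x₀ - ρ y| ≤ L * |x₀ - y|)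
    (hsubK : IntegrableOn (fun y => (ρ x₀ - ρ y) * (ε / (ε ^ 2 + (x₀ - y) ^ 2)))
      (Ioo (x₀ - η) (x₀ + η)) volume) :
    |∫ y in Ioo (x₀ - η) (x₀ + η), (ρ x₀ - ρ y) * (ε / (ε ^ 2 + (x₀ - y) ^ 2))| ≤
      L * (ε * (Real.log (ε ^ 2 + η ^ 2) - Real.log (ε ^ 2))) := by
  have hK0 : ∀ y : ℝ, 0 ≤ ε / (ε ^ 2 + (x₀ - y) ^ 2) := fun y => by positivity
  have h1 : |∫ y in Ioo (x₀ - η) (x₀ + η), (ρ x₀ - ρ y) * (ε / (ε ^ 2 + (x₀ - y) ^ 2))| ≤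
      ∫ y in Ioo (x₀ - η) (x₀ + η), |(ρ x₀ - ρ y) * (ε / (ε ^ 2 + (x₀ - y) ^ 2))| := by
    simpa only [Real.norm_eq_abs] using
      norm_integral_le_integral_norm (μ := volume.restrict (Ioo (x₀ - η) (x₀ + η)))
        (fun y => (ρ x₀ - ρ y) * (ε / (ε ^ 2 + (x₀ - y) ^ 2)))
  have h2 : ∫ y in Ioo (x₀ - η) (x₀ + η), |(ρ x₀ - ρ y) * (ε / (ε ^ 2 + (x₀ - y) ^ 2))| ≤
      ∫ y in Ioo (x₀ - η) (x₀ + η), L * (ε * |x₀ - y| / (ε ^ 2 + (x₀ - y) ^ 2)) := by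
    refine setIntegral_mono_on hsubK.abs ((abs_kernel_integrableOn hε).const_mul L)
      measurableSet_Ioo (fun y hy => ?_)
    rw [abs_mul, abs_of_nonneg (hK0 y)]
    calc |ρ x₀ - ρ y| * (ε / (ε ^ 2 + (x₀ - y) ^ 2))
        ≤ (L * |x₀ - y|) * (ε / (ε ^ 2 + (x₀ - y) ^ 2)) :=
          mul_le_mul_of_nonneg_right (hLip y hy) (hK0 y)
      _ = L * (ε * |x₀ - y| / (ε ^ 2 + (x₀ - y) ^ 2)) := by ring
  have h3 : ∫ y in Ioo (x₀ - η) (x₀ + η), L * (ε * |x₀ - y| / (ε ^ 2 + (x₀ - y) ^ 2)) =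
      L * (ε * (Real.log (ε ^ 2 + η ^ 2) - Real.log (ε ^ 2))) := by
    rw [integral_const_mul, abs_kernel_integral hε hη]
  linarith

lemma withDensity_integral_eq {ε x₀ η : ℝ} {ρ : ℝ → ℝ} (μ : Measure ℝ)
    (hρ0 : ∀ y ∈ Ioo (x₀ - η) (x₀ + η), 0 ≤ ρ y)
    (hρint : IntegrableOn ρ (Ioo (x₀ - η) (x₀ + η)) volume)
    (hμI : μ.restrict (Ioo (x₀ - η) (x₀ + η)) =
      (volume.restrict (Ioo (x₀ - η) (x₀ + η))).withDensity (fun y => ENNReal.ofReal (ρ y))) :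
    ∫ y in Ioo (x₀ - η) (x₀ + η), ε / (ε ^ 2 + (x₀ - y) ^ 2) ∂μ =
      ∫ y in Ioo (x₀ - η) (x₀ + η), ρ y * (ε / (ε ^ 2 + (x₀ - y) ^ 2)) := by
  set K : ℝ → ℝ := fun y => ε / (ε ^ 2 + (x₀ - y) ^ 2) with hKdef
  have hmeas : AEMeasurable (fun y => (ρ y).toNNReal)
      (volume.restrict (Ioo (x₀ - η) (x₀ + η))) :=
    hρint.aestronglyMeasurable.aemeasurable.real_toNNReal
  have e1 : (fun y => ENNReal.ofReal (ρ y)) = fun y => ((ρ y).toNNReal : ENNReal) := rfl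
  calc ∫ y in Ioo (x₀ - η) (x₀ + η), K y ∂μ
      = ∫ y, K y ∂(μ.restrict (Ioo (x₀ - η) (x₀ + η))) := rfl
    _ = ∫ y, K y ∂((volume.restrict (Ioo (x₀ - η) (x₀ + η))).withDensity
          fun y => ((ρ y).toNNReal : ENNReal)) := by rw [hμI, e1]
    _ = ∫ y, (ρ y).toNNReal • K y ∂(volume.restrict (Ioo (x₀ - η) (x₀ + η))) :=
        integral_withDensity_eq_integral_smul₀ hmeas K
    _ = ∫ y in Ioo (x₀ - η) (x₀ + η), ρ y * K y := by
        apply integral_congr_ae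
        filter_upwards [ae_restrict_mem measurableSet_Ioo] with y hy
        rw [NNReal.smul_def, Real.coe_toNNReal _ (hρ0 y hy), smul_eq_mul]

lemma final_arith {ε η L ρ₀ : ℝ} (hη : 0 < η) (hL0 : 0 ≤ L) (hρ₀ : 0 ≤ ρ₀)
    (hε : 0 < ε) (hε2 : ε < 1 / 2) :
    (1 / π) * (2 * ρ₀ / η * ε + L * (ε * (Real.log (ε ^ 2 + η ^ 2) - Real.log (ε ^ 2)))
        + 1 / η ^ 2 * ε) ≤
      ((1 / π) * (L * (Real.log (1 + η ^ 2) / Real.log 2 + 2) + 2 * ρ₀ / η / Real.log 2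
        + 1 / (η ^ 2 * Real.log 2)) + 1) * (ε * Real.log (1 / ε)) := by
  have hlog2 : (0 : ℝ) < Real.log 2 := Real.log_pos (by norm_num)
  have hlog1η : (0 : ℝ) ≤ Real.log (1 + η ^ 2) := Real.log_nonneg (by nlinarith)
  set ℓ := Real.log (1 / ε) with hℓdef
  have hℓ2 : Real.log 2 ≤ ℓ := by
    apply Real.log_le_log (by norm_num)
    rw [le_div_iff₀ hε]; linarith
  have hℓpos : 0 < ℓ := lt_of_lt_of_le hlog2 hℓ2
  have hlogb : Real.log (ε ^ 2 + η ^ 2) - Real.log (ε ^ 2) ≤ Real.log (1 + η ^ 2) + 2 * ℓ := by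
    have h1 : Real.log (ε ^ 2 + η ^ 2) ≤ Real.log (1 + η ^ 2) := by
      apply Real.log_le_log (by positivity)
      nlinarith
    have h2 : Real.log (ε ^ 2) = 2 * Real.log ε := by
      rw [Real.log_pow]; norm_num
    have h3 : ℓ = -Real.log ε := by rw [hℓdef, one_div, Real.log_inv]
    linarith
  have hP0 : 0 ≤ ε * ℓ := by positivity
  have key : ∀ a : ℝ, 0 ≤ a → a * ε ≤ a / Real.log 2 * (ε * ℓ) := by
    intro a ha
    rw [div_mul_eq_mul_div, le_div_iff₀ hlog2]
    calc a * ε * Real.log 2 = a * (ε * Real.log 2) := by ring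
      _ ≤ a * (ε * ℓ) := mul_le_mul_of_nonneg_left
          (mul_le_mul_of_nonneg_left hℓ2 hε.le) ha
  have k1 := key (2 * ρ₀ / η) (by positivity)
  have k2 := key (1 / η ^ 2) (by positivity)
  have k3 := key (L * Real.log (1 + η ^ 2)) (mul_nonneg hL0 hlog1η)
  have hd : L * (ε * (Real.log (ε ^ 2 + η ^ 2) - Real.log (ε ^ 2))) ≤
      L * Real.log (1 + η ^ 2) * ε + 2 * L * (ε * ℓ) := by
    have := mul_le_mul_of_nonneg_left hlogb (mul_nonneg hL0 hε.le)
    nlinarith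
  have hB : 2 * ρ₀ / η * ε + L * (ε * (Real.log (ε ^ 2 + η ^ 2) - Real.log (ε ^ 2)))
      + 1 / η ^ 2 * ε ≤
      (L * (Real.log (1 + η ^ 2) / Real.log 2 + 2) + 2 * ρ₀ / η / Real.log 2
        + 1 / (η ^ 2 * Real.log 2)) * (ε * ℓ) := by
    have e2 : (1 / η ^ 2) / Real.log 2 = 1 / (η ^ 2 * Real.log 2) := by
      rw [div_div]
    rw [e2] at k2
    have e3 : (L * Real.log (1 + η ^ 2)) / Real.log 2 * (ε * ℓ) =
        L * (Real.log (1 + η ^ 2) / Real.log 2) * (ε * ℓ) := by ring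
    rw [e3] at k3
    nlinarith [k1, k2, k3, hd]
  have hπ : (0:ℝ) < 1 / π := by positivity
  calc (1 / π) * (2 * ρ₀ / η * ε + L * (ε * (Real.log (ε ^ 2 + η ^ 2) - Real.log (ε ^ 2)))
        + 1 / η ^ 2 * ε)
      ≤ (1 / π) * ((L * (Real.log (1 + η ^ 2) / Real.log 2 + 2) + 2 * ρ₀ / η / Real.log 2
        + 1 / (η ^ 2 * Real.log 2)) * (ε * ℓ)) := mul_le_mul_of_nonneg_left hB hπ.le
    _ ≤ ((1 / π) * (L * (Real.log (1 + η ^ 2) / Real.log 2 + 2) + 2 * ρ₀ / η / Real.log 2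
        + 1 / (η ^ 2 * Real.log 2)) + 1) * (ε * ℓ) := by nlinarith

/-- If `μ` is a Borel probability measure on `ℝ`, absolutely continuous on
`I = (x₀−η, x₀+η)` with Lipschitz density `ρ ∈ C^{0,1}(I)`, then the Poisson
smoothed measure satisfies `|ρ(x₀) − μ^ε(x₀)| = O(ε log(1/ε))` as `ε ↓ 0`. -/
theorem stmt_19 (μ : Measure ℝ) [IsProbabilityMeasure μ] (x₀ η : ℝ) (hη : 0 < η)
    (ρ : ℝ → ℝ)
    (hac : ACOnWithDensity μ (Ioo (x₀ - η) (x₀ + η)) ρ)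
    (hlip : ∃ L : ℝ, 0 ≤ L ∧ ∀ x ∈ Ioo (x₀ - η) (x₀ + η), ∀ y ∈ Ioo (x₀ - η) (x₀ + η),
      |ρ x - ρ y| ≤ L * |x - y|) :
    ∃ C > (0 : ℝ), ∃ ε₀ ∈ Set.Ioo (0 : ℝ) 1, ∀ ε : ℝ, 0 < ε → ε < ε₀ →
      |ρ x₀ - poissonSmooth μ ε x₀| ≤ C * (ε * Real.log (1 / ε)) := by
  obtain ⟨L, hL0, hLip⟩ := hlip
  obtain ⟨hρ0, hρint, hμI⟩ := hac
  have hx₀I : x₀ ∈ Ioo (x₀ - η) (x₀ + η) := by constructor <;> linarith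
  have hρx₀ : 0 ≤ ρ x₀ := hρ0 _ hx₀I
  have hlog2 : (0 : ℝ) < Real.log 2 := Real.log_pos (by norm_num)
  have hlog1η : (0 : ℝ) ≤ Real.log (1 + η ^ 2) := Real.log_nonneg (by nlinarith)
  refine ⟨(1 / π) * (L * (Real.log (1 + η ^ 2) / Real.log 2 + 2) + 2 * ρ x₀ / η / Real.log 2
      + 1 / (η ^ 2 * Real.log 2)) + 1, ?_, 1 / 2, ⟨by norm_num, by norm_num⟩, ?_⟩
  · have h1 : 0 ≤ Real.log (1 + η ^ 2) / Real.log 2 := div_nonneg hlog1η hlog2.le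
    have h4 : 0 ≤ L * (Real.log (1 + η ^ 2) / Real.log 2 + 2) := mul_nonneg hL0 (by linarith)
    have h2 : 0 ≤ 2 * ρ x₀ / η / Real.log 2 := by positivity
    have h3 : 0 ≤ 1 / (η ^ 2 * Real.log 2) := by positivity
    have h5 : (0 : ℝ) ≤ 1 / π := by positivity
    nlinarith
  intro ε hε hε2
  have hK0 : ∀ y : ℝ, 0 ≤ ε / (ε ^ 2 + (x₀ - y) ^ 2) := fun y => by positivity
  have hKbd : ∀ y : ℝ, ε / (ε ^ 2 + (x₀ - y) ^ 2) ≤ 1 / ε := by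
    intro y
    rw [div_le_div_iff₀ (by positivity) hε]
    nlinarith [sq_nonneg (x₀ - y)]
  have hKc : Continuous (fun y : ℝ => ε / (ε ^ 2 + (x₀ - y) ^ 2)) := kernel_cont hε
  have hKint : Integrable (fun y : ℝ => ε / (ε ^ 2 + (x₀ - y) ^ 2)) μ := by
    apply (integrable_const (1 / ε)).mono' hKc.aestronglyMeasurable
    filter_upwards with y
    rw [Real.norm_eq_abs, abs_of_nonneg (hK0 y)]
    exact hKbd y
  have hKIv : IntegrableOn (fun y : ℝ => ε / (ε ^ 2 + (x₀ - y) ^ 2))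
      (Ioo (x₀ - η) (x₀ + η)) volume := kernel_integrableOn hε
  have hρK : IntegrableOn (fun y => ρ y * (ε / (ε ^ 2 + (x₀ - y) ^ 2)))
      (Ioo (x₀ - η) (x₀ + η)) volume := by
    have h := hρint.bdd_mul (c := 1 / ε) hKc.aestronglyMeasurable.restrict
      (ae_of_all _ fun y => by rw [Real.norm_eq_abs, abs_of_nonneg (hK0 y)]; exact hKbd y)
    exact h.congr (ae_of_all _ fun y => mul_comm _ _)
  have hρx₀K : IntegrableOn (fun y => ρ x₀ * (ε / (ε ^ 2 + (x₀ - y) ^ 2)))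
      (Ioo (x₀ - η) (x₀ + η)) volume := hKIv.const_mul (ρ x₀)
  have hsubK : IntegrableOn (fun y => (ρ x₀ - ρ y) * (ε / (ε ^ 2 + (x₀ - y) ^ 2)))
      (Ioo (x₀ - η) (x₀ + η)) volume := by
    have h := hρx₀K.sub hρK
    exact h.congr (ae_of_all _ fun y => by simp only [Pi.sub_apply]; ring)
  have hID : ∫ y in Ioo (x₀ - η) (x₀ + η), ε / (ε ^ 2 + (x₀ - y) ^ 2) ∂μ =
      ∫ y in Ioo (x₀ - η) (x₀ + η), ρ y * (ε / (ε ^ 2 + (x₀ - y) ^ 2)) :=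
    withDensity_integral_eq μ hρ0 hρint hμI
  have hT1 : ∫ y in Ioo (x₀ - η) (x₀ + η), (ρ x₀ - ρ y) * (ε / (ε ^ 2 + (x₀ - y) ^ 2)) =
      ρ x₀ * (2 * arctan (η / ε)) -
        ∫ y in Ioo (x₀ - η) (x₀ + η), ρ y * (ε / (ε ^ 2 + (x₀ - y) ^ 2)) := by
    have e : ∀ y : ℝ, (ρ x₀ - ρ y) * (ε / (ε ^ 2 + (x₀ - y) ^ 2)) =
        ρ x₀ * (ε / (ε ^ 2 + (x₀ - y) ^ 2)) - ρ y * (ε / (ε ^ 2 + (x₀ - y) ^ 2)) :=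
      fun y => by ring
    simp_rw [e]
    rw [integral_sub hρx₀K hρK, integral_const_mul, kernel_integral_Ioo hε hη]
  have hsplit : ∫ y, ε / (ε ^ 2 + (x₀ - y) ^ 2) ∂μ =
      (∫ y in Ioo (x₀ - η) (x₀ + η), ε / (ε ^ 2 + (x₀ - y) ^ 2) ∂μ) +
        ∫ y in (Ioo (x₀ - η) (x₀ + η))ᶜ, ε / (ε ^ 2 + (x₀ - y) ^ 2) ∂μ :=
    (integral_add_compl measurableSet_Ioo hKint).symm
  have harc : π - 2 * arctan (η / ε) = 2 * arctan (ε / η) := by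
    have h := Real.arctan_inv_of_pos (div_pos hη hε)
    rw [inv_div] at h
    rw [h]; ring
  have harc0 : 0 ≤ arctan (ε / η) := by
    rw [← Real.arctan_zero]
    exact Real.arctan_strictMono.monotone (by positivity)
  have harcle : arctan (ε / η) ≤ ε / η := by
    have h := Real.le_tan harc0 (Real.arctan_lt_pi_div_two _)
    rwa [Real.tan_arctan] at h
  have hps : poissonSmooth μ ε x₀ = (1 / π) * ∫ y, ε / (ε ^ 2 + (x₀ - y) ^ 2) ∂μ := rfl
  have hiden : ρ x₀ - poissonSmooth μ ε x₀ =
      (1 / π) * (ρ x₀ * (2 * arctan (ε / η)) +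
        (∫ y in Ioo (x₀ - η) (x₀ + η), (ρ x₀ - ρ y) * (ε / (ε ^ 2 + (x₀ - y) ^ 2))) -
        ∫ y in (Ioo (x₀ - η) (x₀ + η))ᶜ, ε / (ε ^ 2 + (x₀ - y) ^ 2) ∂μ) := by
    have hπ : (π : ℝ) ≠ 0 := Real.pi_ne_zero
    have hI2 : ∫ y in Ioo (x₀ - η) (x₀ + η), ρ y * (ε / (ε ^ 2 + (x₀ - y) ^ 2)) =
        ρ x₀ * (2 * arctan (η / ε)) -
          ∫ y in Ioo (x₀ - η) (x₀ + η), (ρ x₀ - ρ y) * (ε / (ε ^ 2 + (x₀ - y) ^ 2)) := by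
      linarith
    rw [hps, hsplit, hID, hI2, ← harc]
    field_simp
    ring
  have hT1bd := inner_bound hε hη hL0 hρint (fun y hy => hLip x₀ hx₀I y hy) hsubK
  have hT3bd := compl_bound μ hε hη (x₀ := x₀)
  have hsum : |ρ x₀ * (2 * arctan (ε / η)) +
      (∫ y in Ioo (x₀ - η) (x₀ + η), (ρ x₀ - ρ y) * (ε / (ε ^ 2 + (x₀ - y) ^ 2))) -
      ∫ y in (Ioo (x₀ - η) (x₀ + η))ᶜ, ε / (ε ^ 2 + (x₀ - y) ^ 2) ∂μ| ≤
      2 * ρ x₀ / η * ε + L * (ε * (Real.log (ε ^ 2 + η ^ 2) - Real.log (ε ^ 2)))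
        + 1 / η ^ 2 * ε := by
    set a := ρ x₀ * (2 * arctan (ε / η)) with hadef
    set T1 := ∫ y in Ioo (x₀ - η) (x₀ + η), (ρ x₀ - ρ y) * (ε / (ε ^ 2 + (x₀ - y) ^ 2))
      with hT1def
    set T3 := ∫ y in (Ioo (x₀ - η) (x₀ + η))ᶜ, ε / (ε ^ 2 + (x₀ - y) ^ 2) ∂μ with hT3def
    have htri : |a + T1 - T3| ≤ |a| + |T1| + |T3| := by
      have h1 : |a + T1 - T3| ≤ |a + T1| + |T3| := by
        rw [sub_eq_add_neg]
        exact (abs_add_le _ _).trans (by rw [abs_neg])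
      have h2 : |a + T1| ≤ |a| + |T1| := abs_add_le _ _
      linarith
    have ha : |a| ≤ 2 * ρ x₀ / η * ε := by
      rw [hadef, abs_of_nonneg (by positivity)]
      have h := mul_le_mul_of_nonneg_left harcle (by positivity : (0:ℝ) ≤ 2 * ρ x₀)
      calc ρ x₀ * (2 * arctan (ε / η)) = 2 * ρ x₀ * arctan (ε / η) := by ring
        _ ≤ 2 * ρ x₀ * (ε / η) := h
        _ = 2 * ρ x₀ / η * ε := by field_simp
    have hc : |T3| ≤ 1 / η ^ 2 * ε := by
      calc |T3| ≤ ε / η ^ 2 := hT3bd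
        _ = 1 / η ^ 2 * ε := by ring
    linarith [hT1bd]
  calc |ρ x₀ - poissonSmooth μ ε x₀| =
      (1 / π) * |ρ x₀ * (2 * arctan (ε / η)) +
        (∫ y in Ioo (x₀ - η) (x₀ + η), (ρ x₀ - ρ y) * (ε / (ε ^ 2 + (x₀ - y) ^ 2))) -
        ∫ y in (Ioo (x₀ - η) (x₀ + η))ᶜ, ε / (ε ^ 2 + (x₀ - y) ^ 2) ∂μ| := by
        rw [hiden, abs_mul, abs_of_nonneg (by positivity : (0:ℝ) ≤ 1 / π)]
    _ ≤ (1 / π) * (2 * ρ x₀ / η * ε + L * (ε * (Real.log (ε ^ 2 + η ^ 2) - Real.log (ε ^ 2)))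
        + 1 / η ^ 2 * ε) := mul_le_mul_of_nonneg_left hsum (by positivity)
    _ ≤ ((1 / π) * (L * (Real.log (1 + η ^ 2) / Real.log 2 + 2) + 2 * ρ x₀ / η / Real.log 2
        + 1 / (η ^ 2 * Real.log 2)) + 1) * (ε * Real.log (1 / ε)) :=
      final_arith hη hL0 hρx₀ hε hε2
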